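/- (Exchangeability) Let σ be a chip configuration and ρ, ρ' two collections of rotor stacks such that for each vertex x, the finite sequences ρ'_1(x),…,ρ'_{u(ρ,σ)(x)−1}(x) and ρ_1(x),…,ρ_{u(ρ,σ)(x)−1}(x) are permutations of each other, and ρ_{u(ρ,σ)(x)}(x) = ρ'_{u(ρ,σ)(x)}(x). Then the odometers agree: u(ρ',σ) = u(ρ,σ). -/

import Mathlib

open scoped BigOperators

open Classical in
/-- Number of occurrences of the edge `e` among the rotors `ρ_1(s e), …, ρ_n(s e)`. -/
noncomputable def Rcount {V E : Type*} (src : E → V) (ρ : V → ℕ → E) (e : E) (n : ℕ) : ℕ :=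
  ((Finset.Icc 1 n).filter fun k => ρ (src e) k = e).card

open Classical in
/-- The stack Laplacian `Δ_ρ u (x) = Σ_{t(e)=x} R_ρ(e, u(s e)) − u x`. -/
noncomputable def stackLap {V E : Type*} (src tgt : E → V) (ρ : V → ℕ → E)
    (u : V → ℕ) (x : V) : ℤ :=
  (∑ᶠ e : E, if tgt e = x then (Rcount src ρ e (u (src e)) : ℤ) else 0) - u x

/-- A rotor configuration `r` is acyclic on `A`: every nonempty finite subset of `A`
contains a vertex whose rotor points outside the subset. -/
def AcyclicOn {V E : Type*} (tgt : E → V) (r : V → E) (A : Set V) : Prop :=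
  ∀ A' ⊆ A, A'.Finite → A'.Nonempty → ∃ x ∈ A', tgt (r x) ∉ A'

/-- `u` is the odometer of the chip configuration `σ` with rotor stacks `ρ`:
`u` has finite support, `σ + Δ_ρ u ≤ 1` everywhere, `σ + Δ_ρ u = 1` on the support
of `u`, and the top rotors `Top_ρ(u)` are acyclic on the support of `u`. -/
def IsOdometer {V E : Type*} (src tgt : E → V) (ρ : V → ℕ → E)
    (σ : V → ℤ) (u : V → ℕ) : Prop :=
  (Function.support u).Finite ∧
  (∀ x, σ x + stackLap src tgt ρ u x ≤ 1) ∧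
  (∀ x, u x ≠ 0 → σ x + stackLap src tgt ρ u x = 1) ∧
  AcyclicOn tgt (fun x => ρ x (u x)) (Function.support u)

open Classical in
lemma Rcount_mono {V E : Type*} (src : E → V) (ρ : V → ℕ → E) (e : E) {m n : ℕ}
    (h : m ≤ n) : Rcount src ρ e m ≤ Rcount src ρ e n := by
  apply Finset.card_le_card
  exact Finset.filter_subset_filter _ (Finset.Icc_subset_Icc_right h)

open Classical in
lemma Rcount_eq_zero_of_not_mem {V E : Type*} (src : E → V) (ρ : V → ℕ → E) (e : E) {n m : ℕ}
    (hnm : n ≤ m) (he : e ∉ (Finset.Icc 1 m).image (ρ (src e))) :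
    Rcount src ρ e n = 0 := by
  rw [Rcount, Finset.card_eq_zero, Finset.filter_eq_empty_iff]
  intro k hk hke
  exact he (Finset.mem_image.2 ⟨k, Finset.Icc_subset_Icc_right hnm hk, hke⟩)

open Classical in
lemma stackLap_eq_sum {V E : Type*} (src tgt : E → V) (ρ : V → ℕ → E)
    (hloc : ∀ x : V, {e : E | tgt e = x}.Finite) (u : V → ℕ) (x : V) :
    stackLap src tgt ρ u x =
      (∑ e ∈ (hloc x).toFinset, (Rcount src ρ e (u (src e)) : ℤ)) - u x := by
  rw [stackLap]
  congr 1
  rw [finsum_eq_finset_sum_of_support_subset _ (s := (hloc x).toFinset)]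
  · refine Finset.sum_congr rfl fun e he => ?_
    have h : tgt e = x := by simpa using (hloc x).mem_toFinset.1 he
    rw [if_pos h]
  · intro e he
    simp only [Function.mem_support, ne_eq] at he
    simp only [Set.Finite.coe_toFinset, Set.mem_setOf_eq]
    by_contra h
    exact he (if_neg h)

open Classical in
lemma sum_Rcount_out {V E : Type*} (src : E → V) (ρ : V → ℕ → E)
    (hsrc : ∀ x k, src (ρ x k) = x) (x : V) {n m : ℕ} (hnm : n ≤ m) :
    ∑ e ∈ (Finset.Icc 1 m).image (ρ x), Rcount src ρ e n = n := by
  have hsub : (Finset.Icc 1 n).image (ρ x) ⊆ (Finset.Icc 1 m).image (ρ x) :=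
    Finset.image_subset_image (Finset.Icc_subset_Icc_right hnm)
  rw [← Finset.sum_subset hsub (fun e he hne => by
    obtain ⟨k, hk, hke⟩ := Finset.mem_image.1 he
    have hse : src e = x := by rw [← hke, hsrc]
    exact Rcount_eq_zero_of_not_mem src ρ e le_rfl (by rw [hse]; exact hne))]
  have hcongr : ∀ e ∈ (Finset.Icc 1 n).image (ρ x),
      Rcount src ρ e n = ((Finset.Icc 1 n).filter (fun a => ρ x a = e)).card := by
    intro e he
    obtain ⟨k, _, hke⟩ := Finset.mem_image.1 he
    have hse : src e = x := by rw [← hke, hsrc]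
    rw [Rcount, hse]
  rw [Finset.sum_congr rfl hcongr,
    ← Finset.card_eq_sum_card_fiberwise (f := ρ x) (s := Finset.Icc 1 n)
      (t := (Finset.Icc 1 n).image (ρ x)) (fun k hk => Finset.mem_image_of_mem _ hk),
    Nat.card_Icc]
  omega

open Classical in
/-- One-sided comparison of odometers (the core of uniqueness). -/
lemma odometer_le {V E : Type*} (src tgt : E → V) (ρ : V → ℕ → E)
    (hsrc : ∀ x k, src (ρ x k) = x)
    (hloc : ∀ x : V, {e : E | tgt e = x}.Finite)
    (σ : V → ℤ) (u u' : V → ℕ)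
    (h1 : ∀ x, σ x + stackLap src tgt ρ u x ≤ 1)
    (hfin' : (Function.support u').Finite)
    (h2' : ∀ x, u' x ≠ 0 → σ x + stackLap src tgt ρ u' x = 1)
    (hac' : AcyclicOn tgt (fun x => ρ x (u' x)) (Function.support u')) :
    ∀ x, u' x ≤ u x := by
  by_contra hcon
  push_neg at hcon
  obtain ⟨x₁, hx₁⟩ := hcon
  set A : Finset V := hfin'.toFinset.filter (fun x => u x < u' x) with hAdef
  have hA : ∀ x, x ∈ A ↔ u x < u' x := by
    intro x
    simp only [hAdef, Finset.mem_filter, Set.Finite.mem_toFinset, Function.mem_support]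
    constructor
    · exact fun h => h.2
    · exact fun h => ⟨by omega, h⟩
  have hAne : A.Nonempty := ⟨x₁, (hA x₁).2 hx₁⟩
  set T : V → Finset E := fun x => (hloc x).toFinset with hTdef
  have hT : ∀ x e, e ∈ T x ↔ tgt e = x := fun x e => (hloc x).mem_toFinset
  set m : V → ℕ := fun x => max (u x) (u' x) with hmdef
  set O : V → Finset E := fun x => (Finset.Icc 1 (m x)).image (ρ x) with hOdef
  have hOsrc : ∀ x e, e ∈ O x → src e = x := by
    intro x e he
    obtain ⟨k, _, hke⟩ := Finset.mem_image.1 he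
    rw [← hke, hsrc]
  set D : E → ℤ := fun e =>
    (Rcount src ρ e (u' (src e)) : ℤ) - (Rcount src ρ e (u (src e)) : ℤ) with hDdef
  -- D is nonneg when src ∈ A, nonpos when src ∉ A
  have hDpos : ∀ e, src e ∈ A → 0 ≤ D e := by
    intro e he
    have := Rcount_mono src ρ e (le_of_lt ((hA _).1 he))
    simp only [hDdef]
    omega
  have hDneg : ∀ e, src e ∉ A → D e ≤ 0 := by
    intro e he
    have h' : u' (src e) ≤ u (src e) := by
      by_contra h
      exact he ((hA _).2 (by omega))
    have := Rcount_mono src ρ e h'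
    simp only [hDdef]
    omega
  -- Step (a): incoming sum bound
  have hin : ∀ x ∈ A, ((u' x : ℤ) - u x) ≤ ∑ e ∈ T x, D e := by
    intro x hx
    have hx' : u x < u' x := (hA x).1 hx
    have e1 := h2' x (by omega)
    have e2 := h1 x
    rw [stackLap_eq_sum src tgt ρ hloc u' x] at e1
    rw [stackLap_eq_sum src tgt ρ hloc u x] at e2
    have : ∑ e ∈ T x, D e =
        (∑ e ∈ T x, (Rcount src ρ e (u' (src e)) : ℤ)) -
        ∑ e ∈ T x, (Rcount src ρ e (u (src e)) : ℤ) := Finset.sum_sub_distrib _ _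
    rw [this]
    have hTx : (hloc x).toFinset = T x := rfl
    rw [hTx] at e1 e2
    omega
  -- Step (b): outgoing sum identity
  have hout : ∀ x ∈ A, ∑ e ∈ O x, D e = ((u' x : ℤ) - u x) := by
    intro x hx
    have h1' := sum_Rcount_out src ρ hsrc x (n := u' x) (m := m x) (le_max_right _ _)
    have h2' := sum_Rcount_out src ρ hsrc x (n := u x) (m := m x) (le_max_left _ _)
    have : ∑ e ∈ O x, D e =
        (∑ e ∈ O x, (Rcount src ρ e (u' (src e)) : ℤ)) -
        ∑ e ∈ O x, (Rcount src ρ e (u (src e)) : ℤ) := Finset.sum_sub_distrib _ _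
    rw [this]
    have hr1 : ∑ e ∈ O x, (Rcount src ρ e (u' (src e)) : ℤ) = (u' x : ℤ) := by
      rw [Finset.sum_congr rfl (fun e he => by rw [hOsrc x e he])]
      rw [← Nat.cast_sum]
      exact_mod_cast congrArg (Nat.cast : ℕ → ℤ) h1'
    have hr2 : ∑ e ∈ O x, (Rcount src ρ e (u (src e)) : ℤ) = (u x : ℤ) := by
      rw [Finset.sum_congr rfl (fun e he => by rw [hOsrc x e he])]
      rw [← Nat.cast_sum]
      exact_mod_cast congrArg (Nat.cast : ℕ → ℤ) h2'
    rw [hr1, hr2]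
  -- the four sums
  set Sin : ℤ := ∑ x ∈ A, ∑ e ∈ T x, D e with hSin
  set Sout : ℤ := ∑ x ∈ A, ∑ e ∈ O x, D e with hSout
  set SinA : ℤ := ∑ x ∈ A, ∑ e ∈ (T x).filter (fun e => src e ∈ A), D e with hSinA
  set SoutA : ℤ := ∑ x ∈ A, ∑ e ∈ (O x).filter (fun e => tgt e ∈ A), D e with hSoutA
  have c1 : Sout ≤ Sin := by
    rw [hSout, Finset.sum_congr rfl hout]
    exact Finset.sum_le_sum hin
  have c2 : Sin ≤ SinA := by
    apply Finset.sum_le_sum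
    intro x hx
    rw [← Finset.sum_filter_add_sum_filter_not (T x) (fun e => src e ∈ A) D]
    have : ∑ e ∈ (T x).filter (fun e => ¬ src e ∈ A), D e ≤ 0 :=
      Finset.sum_nonpos fun e he => hDneg e (Finset.mem_filter.1 he).2
    omega
  -- acyclicity : some vertex of A whose top rotor leaves A
  have hAsub : (A : Set V) ⊆ Function.support u' := by
    intro x hx
    have := (hA x).1 hx
    simp only [Function.mem_support]
    omega
  obtain ⟨x₀, hx₀A, hx₀out⟩ := hac' (A : Set V) hAsub A.finite_toSet
    ⟨x₁, by exact_mod_cast (hA x₁).2 hx₁⟩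
  have hx₀A' : x₀ ∈ A := by exact_mod_cast hx₀A
  have hx₀lt : u x₀ < u' x₀ := (hA x₀).1 hx₀A'
  set estar : E := ρ x₀ (u' x₀) with hestar
  have hsrcestar : src estar = x₀ := hsrc x₀ _
  have hDe : 1 ≤ D estar := by
    have hlt : Rcount src ρ estar (u x₀) < Rcount src ρ estar (u' x₀) := by
      apply Finset.card_lt_card
      constructor
      · exact Finset.filter_subset_filter _ (Finset.Icc_subset_Icc_right (le_of_lt hx₀lt))
      · intro hsub
        have hmem : u' x₀ ∈ (Finset.Icc 1 (u' x₀)).filter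
            (fun k => ρ (src estar) k = estar) := by
          refine Finset.mem_filter.2 ⟨Finset.mem_Icc.2 ⟨by omega, le_rfl⟩, ?_⟩
          rw [hsrcestar]
        have := hsub hmem
        have := (Finset.mem_Icc.1 (Finset.mem_filter.1 this).1).2
        omega
    simp only [hDdef, hsrcestar]
    omega
  have hestarO : estar ∈ O x₀ := by
    refine Finset.mem_image.2 ⟨u' x₀, Finset.mem_Icc.2 ⟨by omega, le_max_right _ _⟩, rfl⟩
  have c3 : SoutA < Sout := by
    apply Finset.sum_lt_sum
    · intro x hx
      rw [← Finset.sum_filter_add_sum_filter_not (O x) (fun e => tgt e ∈ A) D]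
      have : 0 ≤ ∑ e ∈ (O x).filter (fun e => ¬ tgt e ∈ A), D e :=
        Finset.sum_nonneg fun e he => hDpos e (by
          rw [hOsrc x e (Finset.mem_filter.1 he).1]; exact hx)
      omega
    · refine ⟨x₀, hx₀A', ?_⟩
      rw [← Finset.sum_filter_add_sum_filter_not (O x₀) (fun e => tgt e ∈ A) D]
      have hge : D estar ≤ ∑ e ∈ (O x₀).filter (fun e => ¬ tgt e ∈ A), D e := by
        apply Finset.single_le_sum (f := D)
        · intro e he
          exact hDpos e (by
            rw [hOsrc x₀ e (Finset.mem_filter.1 he).1]; exact hx₀A')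
        · refine Finset.mem_filter.2 ⟨hestarO, ?_⟩
          intro h
          exact hx₀out (by exact_mod_cast h)
      have : (0:ℤ) ≤ ∑ e ∈ (O x₀).filter (fun e => tgt e ∈ A), D e :=
        Finset.sum_nonneg fun e he => hDpos e (by
          rw [hOsrc x₀ e (Finset.mem_filter.1 he).1]; exact hx₀A')
      omega
  -- SinA = SoutA by double counting
  have hdisjT : (↑A : Set V).PairwiseDisjoint
      (fun x => (T x).filter (fun e => src e ∈ A)) := by
    intro x _ y _ hxy
    apply Finset.disjoint_left.2
    intro e he he'
    have h1 := (hT x e).1 (Finset.mem_filter.1 he).1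
    have h2 := (hT y e).1 (Finset.mem_filter.1 he').1
    exact hxy (h1 ▸ h2 ▸ rfl)
  have hdisjO : (↑A : Set V).PairwiseDisjoint
      (fun x => (O x).filter (fun e => tgt e ∈ A)) := by
    intro x _ y _ hxy
    apply Finset.disjoint_left.2
    intro e he he'
    have h1 := hOsrc x e (Finset.mem_filter.1 he).1
    have h2 := hOsrc y e (Finset.mem_filter.1 he').1
    exact hxy (h1 ▸ h2 ▸ rfl)
  have hFin : SinA = ∑ e ∈ A.biUnion (fun x => (T x).filter (fun e => src e ∈ A)), D e :=
    (Finset.sum_biUnion hdisjT).symm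
  have hFout : SoutA = ∑ e ∈ A.biUnion (fun x => (O x).filter (fun e => tgt e ∈ A)), D e :=
    (Finset.sum_biUnion hdisjO).symm
  have hsubF : A.biUnion (fun x => (O x).filter (fun e => tgt e ∈ A)) ⊆
      A.biUnion (fun x => (T x).filter (fun e => src e ∈ A)) := by
    intro e he
    obtain ⟨x, hx, he'⟩ := Finset.mem_biUnion.1 he
    have h1 := (Finset.mem_filter.1 he').1
    have h2 := (Finset.mem_filter.1 he').2
    refine Finset.mem_biUnion.2 ⟨tgt e, h2, Finset.mem_filter.2 ⟨(hT _ e).2 rfl, ?_⟩⟩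
    rw [hOsrc x e h1]
    exact hx
  have heq : SinA = SoutA := by
    rw [hFin, hFout]
    refine (Finset.sum_subset hsubF ?_).symm
    intro e heT heO
    obtain ⟨x, hx, he'⟩ := Finset.mem_biUnion.1 heT
    have htgt : tgt e = x := (hT x e).1 (Finset.mem_filter.1 he').1
    have hsrcA : src e ∈ A := (Finset.mem_filter.1 he').2
    have heOx : e ∉ O (src e) := by
      intro h
      exact heO (Finset.mem_biUnion.2 ⟨src e, hsrcA, Finset.mem_filter.2 ⟨h, htgt ▸ hx⟩⟩)
    have hz1 : Rcount src ρ e (u' (src e)) = 0 :=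
      Rcount_eq_zero_of_not_mem src ρ e (le_max_right _ _) heOx
    have hz2 : Rcount src ρ e (u (src e)) = 0 :=
      Rcount_eq_zero_of_not_mem src ρ e (le_max_left _ _) heOx
    simp only [hDdef, hz1, hz2, Nat.cast_zero, sub_zero]
  omega

open Classical in
/-- Exchangeability: if for every vertex `x` the rotors `ρ'_1(x),…,ρ'_{u(x)−1}(x)` are a
permutation of `ρ_1(x),…,ρ_{u(x)−1}(x)`, and `ρ_{u(x)}(x) = ρ'_{u(x)}(x)`, where `u` is
the odometer of `σ` for the stacks `ρ`, then the odometers for `ρ` and `ρ'` agree. -/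
theorem exchangeability {V E : Type*}
    (src tgt : E → V) (ρ ρ' : V → ℕ → E)
    (hsrc : ∀ x k, src (ρ x k) = x) (hsrc' : ∀ x k, src (ρ' x k) = x)
    (hloc : ∀ x : V, {e : E | tgt e = x}.Finite)
    (σ : V → ℤ) (u u' : V → ℕ)
    (hu : IsOdometer src tgt ρ σ u)
    (hperm : ∀ x : V, Multiset.map (ρ x) (Finset.Icc 1 (u x - 1)).val =
      Multiset.map (ρ' x) (Finset.Icc 1 (u x - 1)).val)
    (htop : ∀ x : V, ρ x (u x) = ρ' x (u x))
    (hu' : IsOdometer src tgt ρ' σ u') :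
    u' = u := by
  obtain ⟨hfin, h1, h2, hac⟩ := hu
  obtain ⟨hfin', h1', h2', hac'⟩ := hu'
  -- multiset equality up to level u x
  have hms : ∀ x, Multiset.map (ρ x) (Finset.Icc 1 (u x)).val =
      Multiset.map (ρ' x) (Finset.Icc 1 (u x)).val := by
    intro x
    rcases Nat.eq_zero_or_pos (u x) with h0 | hpos
    · rw [h0]; simp
    · obtain ⟨n, hn⟩ : ∃ n, u x = n + 1 := ⟨u x - 1, by omega⟩
      have hicc : Finset.Icc 1 (n+1) = insert (n+1) (Finset.Icc 1 n) := by
        rw [← Finset.Ico_insert_right (by omega : 1 ≤ n+1), Finset.Ico_add_one_right_eq_Icc]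
      have hnot : (n+1) ∉ Finset.Icc 1 n := by simp
      rw [hn, hicc, Finset.insert_val, Multiset.ndinsert_of_notMem hnot,
        Multiset.map_cons, Multiset.map_cons]
      have h' := hperm x
      rw [hn] at h'
      simp only [Nat.add_sub_cancel] at h'
      rw [h']
      congr 1
      have := htop x
      rw [hn] at this
      exact this
  -- Rcount agrees at level u
  have hRc : ∀ e, Rcount src ρ' e (u (src e)) = Rcount src ρ e (u (src e)) := by
    intro e
    have key : ∀ (τ : V → ℕ → E), Rcount src τ e (u (src e)) =
        Multiset.countP (fun a => a = e)
          (Multiset.map (τ (src e)) (Finset.Icc 1 (u (src e))).val) := by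
      intro τ
      rw [Rcount, Multiset.countP_map]
      rfl
    rw [key ρ, key ρ', hms (src e)]
  -- stack Laplacians agree at u
  have hlap : ∀ x, stackLap src tgt ρ' u x = stackLap src tgt ρ u x := by
    intro x
    rw [stackLap, stackLap]
    congr 1
    apply finsum_congr
    intro e
    rw [hRc e]
  -- u is an odometer for ρ'
  have hodo : IsOdometer src tgt ρ' σ u := by
    refine ⟨hfin, fun x => ?_, fun x hx => ?_, ?_⟩
    · rw [hlap x]; exact h1 x
    · rw [hlap x]; exact h2 x hx
    · have : (fun x => ρ' x (u x)) = fun x => ρ x (u x) := by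
        funext x; exact (htop x).symm
      rw [this]
      exact hac
  obtain ⟨_, k1, k2, k3⟩ := hodo
  have le1 : ∀ x, u' x ≤ u x :=
    odometer_le src tgt ρ' hsrc' hloc σ u u' k1 hfin' h2' hac'
  have le2 : ∀ x, u x ≤ u' x :=
    odometer_le src tgt ρ' hsrc' hloc σ u' u h1' hfin k2 k3
  funext x
  exact le_antisymm (le1 x) (le2 x)
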